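/- On an independence hypergraph L with vertices from a finite totally ordered set V, the weighted coboundary operator ∂^n(w) = Σ_{v∈V} w(v)·dv satisfies ∂^{n+1}(w) ∘ ∂^n(w) = 0, where ∂^n(w){v_0,…,v_n} = Σ_{v∈V} sgn(v)·w(v)·({v_0,…,v_n} ∪ {v}), with sgn(v) = 0 if v ∈ {v_0,…,v_n}, sgn(v) = (−1)^i if v_{i−1} < v < v_i, sgn(v) = (−1)^{n+1} if v_n < v, and sgn(v) = 1 if v < v_0. -/

import Mathlib

set_option linter.unusedSectionVars false
set_option linter.unusedVariables false


/-- `R_n(H)`: the free `R`-module on the `n`-hyperedges of `H` (hyperedges with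
`n+1` vertices), as a submodule of the free module on all finite subsets of `V`. -/
noncomputable def chains (R : Type*) [CommRing R] {V : Type*}
    (H : Set (Finset V)) (n : ℕ) : Submodule R (Finset V →₀ R) :=
  Submodule.span R {x | ∃ σ ∈ H, σ.card = n + 1 ∧ x = Finsupp.single σ 1}

/-- The `w`-weighted coboundary operator `∂^n(w)`, sending `{v_0,…,v_n}` to
`Σ_{v∈V} sgn(v)·w(v)·({v_0,…,v_n} ∪ {v})`, where `sgn(v) = 0` if `v` already
occurs and otherwise `sgn(v) = (−1)^i` with `i` the number of vertices of the
hyperedge smaller than `v`. -/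
noncomputable def wcb (R : Type*) [CommRing R] {V : Type*} [LinearOrder V] [Fintype V]
    (w : V → R) : (Finset V →₀ R) →ₗ[R] (Finset V →₀ R) :=
  Finsupp.lsum R fun σ => LinearMap.toSpanSingleton R _
    (∑ v : V, if v ∈ σ then 0
      else (((-1 : R) ^ ((σ.filter (· < v)).card)) * w v) •
        Finsupp.single (insert v σ) (1 : R))

/-- A hypergraph is an independence hypergraph if all its hyperedges are
non-empty and every superset (within `V`) of a hyperedge is a hyperedge. -/
def IsIndependenceHypergraph {V : Type*} (L : Set (Finset V)) : Prop :=
  (∀ σ ∈ L, σ.Nonempty) ∧ ∀ σ ∈ L, ∀ τ : Finset V, σ ⊆ τ → τ ∈ L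

section Aux

variable (R : Type*) [CommRing R] {V : Type*} [LinearOrder V] [Fintype V] (w : V → R)

/-- The image of a basis element under the weighted coboundary. -/
noncomputable def Dop (σ : Finset V) : Finset V →₀ R :=
  ∑ v : V, if v ∈ σ then 0
    else (((-1 : R) ^ ((σ.filter (· < v)).card)) * w v) •
      Finsupp.single (insert v σ) (1 : R)

lemma wcb_single (σ : Finset V) (r : R) :
    wcb R w (Finsupp.single σ r) = r • Dop R w σ := by
  simp [wcb, Dop, Finsupp.lsum_single, LinearMap.toSpanSingleton_apply]

/-- Coefficient sign. -/
noncomputable def cs (σ : Finset V) (v : V) : R :=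
  ((-1 : R) ^ ((σ.filter (· < v)).card)) * w v

lemma filter_insert_card (σ : Finset V) (u v : V) (hv : v ∉ σ) :
    (((insert v σ).filter (· < u)).card) =
      (σ.filter (· < u)).card + (if v < u then 1 else 0) := by
  rw [Finset.filter_insert]
  split
  · rw [Finset.card_insert_of_notMem (by simp [hv])]
  · simp

lemma sign_comm (σ : Finset V) (u v : V) (hu : u ∉ σ) (hv : v ∉ σ) (huv : u ≠ v) :
    cs R w σ v * cs R w (insert v σ) u = -(cs R w σ u * cs R w (insert u σ) v) := by
  unfold cs
  rw [filter_insert_card (hv := hv), filter_insert_card (hv := hu)]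
  rcases huv.lt_or_gt with h | h
  · rw [if_pos h, if_neg (not_lt_of_gt h)]
    ring
  · rw [if_neg (not_lt_of_gt h), if_pos h]
    ring

/-- The summand of the double sum. -/
noncomputable def Gd (σ : Finset V) (p : V × V) : Finset V →₀ R :=
  if p.1 ∈ σ then 0 else
    if p.2 ∈ insert p.1 σ then 0 else
      (cs R w σ p.1 * cs R w (insert p.1 σ) p.2) •
        Finsupp.single (insert p.2 (insert p.1 σ)) (1 : R)

lemma Gd_swap (σ : Finset V) (p : V × V) :
    Gd R w σ p + Gd R w σ (p.2, p.1) = 0 := by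
  obtain ⟨v, u⟩ := p
  unfold Gd
  dsimp only
  by_cases hv : v ∈ σ
  · simp [hv, Finset.mem_insert, Or.inr hv]
  by_cases hu : u ∈ σ
  · simp [hu, Finset.mem_insert, Or.inr hu]
  by_cases huv : u = v
  · subst huv
    simp
  · rw [if_neg hv, if_neg hu,
      if_neg (by simp [Finset.mem_insert, huv, hu]),
      if_neg (by simp [Finset.mem_insert, Ne.symm huv, hv]),
      Finset.insert_comm u v σ, sign_comm R w σ u v hu hv huv]
    rw [neg_smul, neg_add_cancel]

lemma Gd_diag (σ : Finset V) (v : V) : Gd R w σ (v, v) = 0 := by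
  unfold Gd
  by_cases hv : v ∈ σ
  · simp [hv]
  · simp [hv]

lemma wcb_Dop (σ : Finset V) : wcb R w (Dop R w σ) = 0 := by
  have step : ∀ v : V,
      wcb R w (if v ∈ σ then 0
        else (cs R w σ v) • Finsupp.single (insert v σ) (1 : R)) =
      ∑ u : V, Gd R w σ (v, u) := by
    intro v
    by_cases hv : v ∈ σ
    · simp [hv, Gd]
    · rw [if_neg hv, map_smul, wcb_single, one_smul, Dop, Finset.smul_sum]
      refine Finset.sum_congr rfl fun u _ => ?_
      unfold Gd cs
      dsimp only
      rw [if_neg hv, smul_ite, smul_zero, smul_smul]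
  have : wcb R w (Dop R w σ) = ∑ p ∈ Finset.univ ×ˢ Finset.univ, Gd R w σ p := by
    rw [Dop, map_sum, Finset.sum_product]
    exact Finset.sum_congr rfl fun v _ => step v
  rw [this]
  refine Finset.sum_involution (fun p _ => (p.2, p.1)) (fun p _ => Gd_swap R w σ p)
    (fun p _ hne => ?_) (fun p _ => Finset.mem_product.2 ⟨Finset.mem_univ _, Finset.mem_univ _⟩)
    (fun p _ => rfl)
  intro heq
  apply hne
  have h : p.1 = p.2 := congrArg Prod.snd heq
  have hp : p = (p.1, p.1) := by
    rw [Prod.ext_iff]; exact ⟨rfl, h.symm⟩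
  rw [hp]
  exact Gd_diag R w σ p.1

lemma wcb_wcb_zero (x : Finset V →₀ R) : wcb R w (wcb R w x) = 0 := by
  induction x using Finsupp.induction_linear with
  | zero => simp
  | add f g hf hg => rw [map_add, map_add, hf, hg, add_zero]
  | single σ r => rw [wcb_single, map_smul, wcb_Dop, smul_zero]

end Aux

/-- On an independence hypergraph `L` with vertices from a finite totally
ordered set `V`, the weighted coboundary operator `∂^n(w) = Σ_{v∈V} w(v)·dv`
satisfies `∂^{n+1}(w) ∘ ∂^n(w) = 0`. -/
theorem wcb_wcb (R : Type*) [CommRing R] {V : Type*} [LinearOrder V] [Fintype V]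
    (w : V → R) (L : Set (Finset V)) (hL : IsIndependenceHypergraph L) :
    ∀ (n : ℕ) (x : Finset V →₀ R), x ∈ chains R L n → wcb R w (wcb R w x) = 0 := by
  intro n x _
  exact wcb_wcb_zero R w x
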